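/- (Bellman recursion for the scheduling value function.) For t ≥ 1 and any n×n symmetric positive definite matrix K, the value function satisfies U_t(K) = min over i ∈ {1,…,N} of [ tr( g(B_t(i),R_t(i),K) · W̄_{t−1} ) + U_{t−1}( h(A_t,Q_t, g(B_t(i),R_t(i),K)) ) ], and U_0(K) = min over i ∈ {1,…,N} of tr( g(B_0(i),R_0(i),K) · W̄_{−1} ). -/

import Mathlib

open Matrix Finset

/-- The Riccati-type update `g(B,R,M) = M − M B (Bᵀ M B + R)⁻¹ Bᵀ M`. -/
noncomputable def g {n m : ℕ} (B : Matrix (Fin n) (Fin m) ℝ)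
    (R : Matrix (Fin m) (Fin m) ℝ) (M : Matrix (Fin n) (Fin n) ℝ) :
    Matrix (Fin n) (Fin n) ℝ :=
  M - M * B * (Bᵀ * M * B + R)⁻¹ * Bᵀ * M

/-- `h(A,Q,M) = Aᵀ M A + Q`. -/
def hfun {n : ℕ} (A Q M : Matrix (Fin n) (Fin n) ℝ) : Matrix (Fin n) (Fin n) ℝ :=
  Aᵀ * M * A + Q

/-- The cost `∑_{k=0}^{t} tr(K_{k|k+1} W̄_{k−1})` of a schedule `σ` over horizon `{0,…,t}`
with terminal condition `K_{t+1} = K`, where `K_{k|k+1} = g(B_k(σ k), R_k(σ k), K_{k+1})`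
and `K_k = h(A_k, Q_k, K_{k|k+1})`.  Here `W k` denotes `W̄_{k−1}`. -/
noncomputable def schedCost {n N : ℕ} {m : Fin N → ℕ}
    (A Q W : ℕ → Matrix (Fin n) (Fin n) ℝ)
    (B : (k : ℕ) → (i : Fin N) → Matrix (Fin n) (Fin (m i)) ℝ)
    (R : (k : ℕ) → (i : Fin N) → Matrix (Fin (m i)) (Fin (m i)) ℝ)
    (σ : ℕ → Fin N) : ℕ → Matrix (Fin n) (Fin n) ℝ → ℝ
  | 0, K => ((g (B 0 (σ 0)) (R 0 (σ 0)) K) * W 0).trace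
  | (t + 1), K =>
      ((g (B (t + 1) (σ (t + 1))) (R (t + 1) (σ (t + 1))) K) * W (t + 1)).trace +
        schedCost A Q W B R σ t
          (hfun (A (t + 1)) (Q (t + 1)) (g (B (t + 1) (σ (t + 1))) (R (t + 1) (σ (t + 1))) K))

/-- The scheduling value function `U_t(K)`: the minimum of the cost over all schedules
`σ : {0,…,t} → {1,…,N}`. -/
noncomputable def valueU {n N : ℕ} {m : Fin N → ℕ}
    (A Q W : ℕ → Matrix (Fin n) (Fin n) ℝ)
    (B : (k : ℕ) → (i : Fin N) → Matrix (Fin n) (Fin (m i)) ℝ)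
    (R : (k : ℕ) → (i : Fin N) → Matrix (Fin (m i)) (Fin (m i)) ℝ)
    (t : ℕ) (K : Matrix (Fin n) (Fin n) ℝ) : ℝ :=
  ⨅ σ : ℕ → Fin N, schedCost A Q W B R σ t K

/-- Bellman recursion for the scheduling value function:
`U_t(K) = min_i [tr(g(B_t(i),R_t(i),K) W̄_{t−1}) + U_{t−1}(h(A_t,Q_t,g(B_t(i),R_t(i),K)))]`
for `t ≥ 1`, and `U_0(K) = min_i tr(g(B_0(i),R_0(i),K) W̄_{−1})`. -/

lemma schedCost_congr {n N : ℕ} {m : Fin N → ℕ}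
    (A Q W : ℕ → Matrix (Fin n) (Fin n) ℝ)
    (B : (k : ℕ) → (i : Fin N) → Matrix (Fin n) (Fin (m i)) ℝ)
    (R : (k : ℕ) → (i : Fin N) → Matrix (Fin (m i)) (Fin (m i)) ℝ)
    (t : ℕ) {σ τ : ℕ → Fin N} (h : ∀ k ≤ t, σ k = τ k)
    (K : Matrix (Fin n) (Fin n) ℝ) :
    schedCost A Q W B R σ t K = schedCost A Q W B R τ t K := by
  induction t generalizing K with
  | zero =>
      simp only [schedCost]
      rw [h 0 le_rfl]
  | succ t ih =>
      simp only [schedCost]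
      rw [h (t+1) le_rfl, ih (fun k hk => h k (hk.trans (Nat.le_succ t)))]

lemma schedCost_bddBelow {n N : ℕ} [NeZero N] {m : Fin N → ℕ}
    (A Q W : ℕ → Matrix (Fin n) (Fin n) ℝ)
    (B : (k : ℕ) → (i : Fin N) → Matrix (Fin n) (Fin (m i)) ℝ)
    (R : (k : ℕ) → (i : Fin N) → Matrix (Fin (m i)) (Fin (m i)) ℝ)
    (t : ℕ) (K : Matrix (Fin n) (Fin n) ℝ) :
    BddBelow (Set.range fun σ : ℕ → Fin N => schedCost A Q W B R σ t K) := by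
  have hsub : (Set.range fun σ : ℕ → Fin N => schedCost A Q W B R σ t K) ⊆
      Set.range (fun τ : Fin (t+1) → Fin N =>
        schedCost A Q W B R (fun k => τ ⟨min k t, by omega⟩) t K) := by
    rintro x ⟨σ, rfl⟩
    exact ⟨fun j => σ j, schedCost_congr A Q W B R t
      (fun k hk => by simp [Nat.min_eq_left hk]) K⟩
  exact (Set.Finite.bddBelow (Set.finite_range _)).mono hsub

theorem valueU_bellman {n N : ℕ} [NeZero N] {m : Fin N → ℕ}
    (A Q W : ℕ → Matrix (Fin n) (Fin n) ℝ)
    (B : (k : ℕ) → (i : Fin N) → Matrix (Fin n) (Fin (m i)) ℝ)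
    (R : (k : ℕ) → (i : Fin N) → Matrix (Fin (m i)) (Fin (m i)) ℝ)
    (hQ : ∀ k, (Q k).PosDef) (hR : ∀ k i, (R k i).PosDef)
    (hW : ∀ k, (W k).PosSemidef) :
    (∀ K : Matrix (Fin n) (Fin n) ℝ, K.PosDef →
      valueU A Q W B R 0 K = ⨅ i : Fin N, ((g (B 0 i) (R 0 i) K) * W 0).trace) ∧
    ∀ t : ℕ, ∀ K : Matrix (Fin n) (Fin n) ℝ, K.PosDef →
      valueU A Q W B R (t + 1) K =
        ⨅ i : Fin N,
          (((g (B (t + 1) i) (R (t + 1) i) K) * W (t + 1)).trace +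
            valueU A Q W B R t
              (hfun (A (t + 1)) (Q (t + 1)) (g (B (t + 1) i) (R (t + 1) i) K))) := by
  have key : ∀ (t : ℕ) (σ : ℕ → Fin N) (i : Fin N) (K : Matrix (Fin n) (Fin n) ℝ),
      schedCost A Q W B R (Function.update σ (t+1) i) (t+1) K =
        ((g (B (t + 1) i) (R (t + 1) i) K) * W (t + 1)).trace +
          schedCost A Q W B R σ t
            (hfun (A (t + 1)) (Q (t + 1)) (g (B (t + 1) i) (R (t + 1) i) K)) := by
    intro t σ i K
    have hupd : Function.update σ (t+1) i (t+1) = i := Function.update_self _ _ _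
    simp only [schedCost]
    rw [hupd, schedCost_congr A Q W B R t
      (fun k hk => by rw [Function.update_of_ne (show k ≠ t+1 by omega)]) _]
  constructor
  · intro K _
    apply le_antisymm
    · refine le_ciInf fun i => ?_
      have := ciInf_le (schedCost_bddBelow A Q W B R 0 K) (fun _ => i)
      simpa [schedCost, valueU] using this
    · refine le_ciInf fun σ => ?_
      have := ciInf_le (Set.Finite.bddBelow (Set.finite_range
        (fun i : Fin N => ((g (B 0 i) (R 0 i) K) * W 0).trace))) (σ 0)
      simpa [schedCost] using this
  · intro t K _
    apply le_antisymm
    · refine le_ciInf fun i => ?_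
      rw [valueU, ← sub_le_iff_le_add']
      refine le_ciInf fun σ => ?_
      rw [sub_le_iff_le_add']
      calc valueU A Q W B R (t+1) K
          ≤ schedCost A Q W B R (Function.update σ (t+1) i) (t+1) K :=
            ciInf_le (schedCost_bddBelow A Q W B R (t+1) K) _
        _ = _ := key t σ i K
    · refine le_ciInf fun σ => ?_
      have h1 : (⨅ i : Fin N,
          (((g (B (t + 1) i) (R (t + 1) i) K) * W (t + 1)).trace +
            valueU A Q W B R t
              (hfun (A (t + 1)) (Q (t + 1)) (g (B (t + 1) i) (R (t + 1) i) K)))) ≤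
          ((g (B (t + 1) (σ (t+1))) (R (t + 1) (σ (t+1))) K) * W (t + 1)).trace +
            valueU A Q W B R t
              (hfun (A (t + 1)) (Q (t + 1)) (g (B (t + 1) (σ (t+1))) (R (t + 1) (σ (t+1))) K)) :=
        ciInf_le (Set.Finite.bddBelow (Set.finite_range _)) (σ (t+1))
      refine h1.trans ?_
      simp only [schedCost]
      gcongr
      exact ciInf_le (schedCost_bddBelow A Q W B R t _) σ
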